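/- Let $a_1 < a_2 < \dots < a_l$ be integers with consecutive gaps bounded by $b$ (i.e., $a_{i+1} - a_i \le b$ for all $1 \le i < l$), and let $A = \{a_1, \dots, a_l\}$. Then for every $n > 2b^2$, the $n$-fold sumset satisfies $nA = (n - 2b^2)\{a_1, a_l\} + 2b^2 A$, where $kS$ denotes the $k$-fold sumset $S + S + \dots + S$. -/

import Mathlib

open Pointwise

/-- The `n`-fold sumset of `A`. -/
def foldSum {G : Type*} [AddCommMonoid G] (n : ℕ) (A : Set G) : Set G :=
  {t | ∃ s : Fin n → G, (∀ i, s i ∈ A) ∧ ∑ i, s i = t}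

variable {G : Type*} [AddCommMonoid G] (S T : Set G)

lemma foldSum_zero : foldSum 0 S = {0} := by
  ext x
  constructor
  · rintro ⟨s, -, rfl⟩; simp
  · rintro rfl; exact ⟨Fin.elim0, fun i => i.elim0, by simp⟩

lemma foldSum_succ (n : ℕ) : foldSum (n+1) S = S + foldSum n S := by
  ext x
  constructor
  · rintro ⟨s, hs, rfl⟩
    rw [Fin.sum_univ_succ]
    exact Set.add_mem_add (hs 0) ⟨fun i => s i.succ, fun i => hs _, rfl⟩
  · rintro ⟨u, hu, v, ⟨s, hs, rfl⟩, rfl⟩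
    refine ⟨Fin.cons u s, ?_, by rw [Fin.sum_cons]⟩
    intro i
    refine Fin.cases ?_ ?_ i
    · simpa using hu
    · intro j; simpa using hs j

lemma foldSum_one : foldSum 1 S = S := by
  rw [foldSum_succ, foldSum_zero, Set.add_singleton]
  simp

lemma foldSum_add (m n : ℕ) : foldSum (m + n) S = foldSum m S + foldSum n S := by
  induction m with
  | zero => rw [foldSum_zero, Nat.zero_add, Set.singleton_add]; simp
  | succ k ih =>
      have : k + 1 + n = (k + n) + 1 := by omega
      rw [this, foldSum_succ, ih, foldSum_succ, add_assoc]

lemma foldSum_mono {S T : Set G} (h : S ⊆ T) (n : ℕ) : foldSum n S ⊆ foldSum n T := by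
  rintro x ⟨s, hs, rfl⟩; exact ⟨s, fun i => h (hs i), rfl⟩

lemma foldSum_two_mul (K : ℕ) : foldSum (2 * K) S = foldSum K (S + S) := by
  induction K with
  | zero => simp [foldSum_zero]
  | succ k ih =>
      have : 2 * (k + 1) = (2 * k) + 1 + 1 := by omega
      rw [this, foldSum_succ, foldSum_succ, ih, foldSum_succ, ← add_assoc]

lemma sum_mem_foldSum (T : Finset ℕ) (f : ℕ → G) (c : ℕ → ℕ) {S : Set G}
    (h : ∀ i ∈ T, f i ∈ foldSum (c i) S) :
    (∑ i ∈ T, f i) ∈ foldSum (∑ i ∈ T, c i) S := by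
  classical
  induction T using Finset.induction_on with
  | empty => simp [foldSum_zero]
  | insert _ _ hnotmem ih =>
      rename_i j T'
      rw [Finset.sum_insert hnotmem, Finset.sum_insert hnotmem, foldSum_add]
      exact Set.add_mem_add (h j (Finset.mem_insert_self _ _))
        (ih fun i hi => h i (Finset.mem_insert_of_mem hi))

lemma sum_mem_foldSum_card (T : Finset ℕ) (f : ℕ → G) {S : Set G}
    (h : ∀ i ∈ T, f i ∈ S) :
    (∑ i ∈ T, f i) ∈ foldSum T.card S := by
  have := sum_mem_foldSum T f (fun _ => 1) (S := S)
    (fun i hi => by rw [foldSum_one]; exact h i hi)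
  simpa using this

lemma sum_mem_foldSum_two_card (T : Finset ℕ) (f : ℕ → G) {S : Set G}
    (h : ∀ i ∈ T, f i ∈ S + S) :
    (∑ i ∈ T, f i) ∈ foldSum (2 * T.card) S := by
  have h2 : S + S = foldSum 2 S := by
    rw [foldSum_succ, foldSum_one]
  have := sum_mem_foldSum T f (fun _ => 2) (S := S)
    (fun i hi => by rw [← h2]; exact h i hi)
  simpa [Finset.sum_const, Nat.mul_comm] using this

def sumWalk (p q : ℕ → ℤ) : ℕ → ℤ
  | 0 => 0
  | (k+1) => if 0 < sumWalk p q k then sumWalk p q k - q k else sumWalk p q k + p k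

lemma sumWalk_bound (p q : ℕ → ℤ) (c : ℤ) (hc : 0 ≤ c) :
    ∀ k, (∀ j, j < k → (1 ≤ p j ∧ p j ≤ c ∧ 1 ≤ q j ∧ q j ≤ c)) →
      -c ≤ sumWalk p q k ∧ sumWalk p q k ≤ c := by
  intro k
  induction k with
  | zero => intro _; simp [sumWalk]; omega
  | succ m ih =>
      intro h
      have hm := ih (fun j hj => h j (by omega))
      have hj := h m (by omega)
      rw [sumWalk]
      split <;> omega

lemma one_le_sub_one_lt {l : ℕ} (hl : 1 ≤ l) : l - 1 < l := by omega

lemma gap_adj {b l : ℕ} (a : Fin l → ℤ)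
    (hgap : ∀ (i : ℕ) (h : i + 1 < l), a ⟨i + 1, h⟩ - a ⟨i, Nat.lt_of_succ_lt h⟩ ≤ (b : ℤ))
    (i j : Fin l) (hij : (i : ℕ) + 1 = (j : ℕ)) : a j - a i ≤ (b : ℤ) := by
  have hlt : (i : ℕ) + 1 < l := by have := j.isLt; omega
  have h := hgap i.val hlt
  have e1 : (⟨(i : ℕ) + 1, hlt⟩ : Fin l) = j := Fin.ext (by exact hij)
  have e2 : (⟨(i : ℕ), by omega⟩ : Fin l) = i := Fin.ext rfl
  rw [e1, e2] at h
  exact h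

lemma exists_below {b l : ℕ} (hb : 1 ≤ b) (hl : 1 ≤ l) (a : Fin l → ℤ)
    (hgap : ∀ (i : ℕ) (h : i + 1 < l), a ⟨i + 1, h⟩ - a ⟨i, Nat.lt_of_succ_lt h⟩ ≤ (b : ℤ))
    (v : ℤ) (h1 : a ⟨0, hl⟩ ≤ v) (h2 : v ≤ a ⟨l - 1, one_le_sub_one_lt hl⟩) :
    ∃ w ∈ Set.range a, w ≤ v ∧ v - w < (b : ℤ) := by
  classical
  set P : Finset (Fin l) := Finset.univ.filter (fun i => a i ≤ v) with hP
  have hne : P.Nonempty := ⟨⟨0, by omega⟩, by simp [hP, h1]⟩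
  obtain ⟨i, hiP, hmax⟩ : ∃ i ∈ P, ∀ j ∈ P, j ≤ i :=
    ⟨P.max' hne, P.max'_mem hne, fun j hj => P.le_max' j hj⟩
  have hia : a i ≤ v := by simpa [hP] using hiP
  by_cases hc : i.val + 1 < l
  · obtain ⟨j, hj⟩ : ∃ j : Fin l, (j : ℕ) = (i : ℕ) + 1 := ⟨⟨i.val + 1, hc⟩, rfl⟩
    have hja : v < a j := by
      by_contra hcon
      have hmem : j ∈ P := by simp [hP]; omega
      have := hmax _ hmem
      rw [Fin.le_def] at this
      omega
    have hg := gap_adj a hgap i j (by omega)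
    exact ⟨a i, Set.mem_range_self i, hia, by omega⟩
  · have hival : i = ⟨l - 1, by omega⟩ := by
      have h3 := i.isLt
      exact Fin.ext (by show (i : ℕ) = l - 1; omega)
    rw [hival] at hia
    refine ⟨a ⟨l - 1, by omega⟩, Set.mem_range_self _, hia, ?_⟩
    have : (1 : ℤ) ≤ b := by exact_mod_cast hb
    omega

lemma exists_above {b l : ℕ} (hb : 1 ≤ b) (hl : 1 ≤ l) (a : Fin l → ℤ)
    (hgap : ∀ (i : ℕ) (h : i + 1 < l), a ⟨i + 1, h⟩ - a ⟨i, Nat.lt_of_succ_lt h⟩ ≤ (b : ℤ))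
    (v : ℤ) (h1 : a ⟨0, hl⟩ ≤ v) (h2 : v ≤ a ⟨l - 1, one_le_sub_one_lt hl⟩) :
    ∃ w ∈ Set.range a, v ≤ w ∧ w - v < (b : ℤ) := by
  classical
  set P : Finset (Fin l) := Finset.univ.filter (fun i => v ≤ a i) with hP
  have hne : P.Nonempty := ⟨⟨l - 1, by omega⟩, by simp [hP, h2]⟩
  obtain ⟨i, hiP, hmin⟩ : ∃ i ∈ P, ∀ j ∈ P, i ≤ j :=
    ⟨P.min' hne, P.min'_mem hne, fun j hj => P.min'_le j hj⟩
  have hia : v ≤ a i := by simpa [hP] using hiP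
  by_cases hc : 0 < i.val
  · obtain ⟨j, hj⟩ : ∃ j : Fin l, (j : ℕ) = (i : ℕ) - 1 := ⟨⟨i.val - 1, by omega⟩, rfl⟩
    have hja : a j < v := by
      by_contra hcon
      have hmem : j ∈ P := by simp [hP]; omega
      have := hmin _ hmem
      rw [Fin.le_def] at this
      omega
    have hg := gap_adj a hgap j i (by omega)
    exact ⟨a i, Set.mem_range_self i, hia, by omega⟩
  · have hival : i = ⟨0, by omega⟩ := Fin.ext (by show (i : ℕ) = 0; omega)
    rw [hival] at hia
    refine ⟨a ⟨0, by omega⟩, Set.mem_range_self _, hia, ?_⟩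
    have : (1 : ℤ) ≤ b := by exact_mod_cast hb
    omega

lemma range_bounds {l : ℕ} (hl : 1 ≤ l) (a : Fin l → ℤ) (hmono : StrictMono a) :
    ∀ z ∈ Set.range a, a ⟨0, hl⟩ ≤ z ∧ z ≤ a ⟨l - 1, one_le_sub_one_lt hl⟩ := by
  rintro z ⟨i, rfl⟩
  have h1 : (⟨0, by omega⟩ : Fin l) ≤ i := by simp [Fin.le_def]
  have h2 : i ≤ (⟨l - 1, by omega⟩ : Fin l) := by
    have := i.isLt
    simp [Fin.le_def]
    omega
  exact ⟨hmono.monotone h1, hmono.monotone h2⟩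

lemma pair_rewrite {b l : ℕ} (hb : 1 ≤ b) (hl : 1 ≤ l) (a : Fin l → ℤ)
    (hmono : StrictMono a)
    (hgap : ∀ (i : ℕ) (h : i + 1 < l), a ⟨i + 1, h⟩ - a ⟨i, Nat.lt_of_succ_lt h⟩ ≤ (b : ℤ)) :
    ∀ u ∈ Set.range a, ∀ v ∈ Set.range a,
    ∃ e ∈ ({a ⟨0, hl⟩, a ⟨l - 1, one_le_sub_one_lt hl⟩} : Set ℤ),
    ∃ w₁ ∈ Set.range a, ∃ w₂ ∈ Set.range a,
    ∃ p q : ℤ, 0 ≤ p ∧ p < b ∧ 0 ≤ q ∧ q < b ∧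
      u + v = e + w₁ + p ∧ u + v = e + w₂ - q := by
  intro u hu v hv
  obtain ⟨hu1, hu2⟩ := range_bounds hl a hmono u hu
  obtain ⟨hv1, hv2⟩ := range_bounds hl a hmono v hv
  by_cases hc : u + v ≤ a ⟨0, by omega⟩ + a ⟨l - 1, by omega⟩
  · obtain ⟨w₁, hw₁, hw₁le, hw₁lt⟩ := exists_below hb hl a hgap (u + v - a ⟨0, by omega⟩)
      (by omega) (by omega)
    obtain ⟨w₂, hw₂, hw₂le, hw₂lt⟩ := exists_above hb hl a hgap (u + v - a ⟨0, by omega⟩)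
      (by omega) (by omega)
    exact ⟨a ⟨0, by omega⟩, Or.inl rfl, w₁, hw₁, w₂, hw₂,
      u + v - a ⟨0, by omega⟩ - w₁, w₂ - (u + v - a ⟨0, by omega⟩),
      by omega, by omega, by omega, by omega, by omega, by omega⟩
  · obtain ⟨w₁, hw₁, hw₁le, hw₁lt⟩ := exists_below hb hl a hgap (u + v - a ⟨l - 1, by omega⟩)
      (by omega) (by omega)
    obtain ⟨w₂, hw₂, hw₂le, hw₂lt⟩ := exists_above hb hl a hgap (u + v - a ⟨l - 1, by omega⟩)
      (by omega) (by omega)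
    exact ⟨a ⟨l - 1, by omega⟩, Or.inr rfl, w₁, hw₁, w₂, hw₂,
      u + v - a ⟨l - 1, by omega⟩ - w₁, w₂ - (u + v - a ⟨l - 1, by omega⟩),
      by omega, by omega, by omega, by omega, by omega, by omega⟩
lemma core_exact {b l : ℕ} (hb : 1 ≤ b) (hl : 1 ≤ l) (a : Fin l → ℤ)
    (hmono : StrictMono a)
    (hgap : ∀ (i : ℕ) (h : i + 1 < l), a ⟨i + 1, h⟩ - a ⟨i, Nat.lt_of_succ_lt h⟩ ≤ (b : ℤ)) :
    foldSum (2 * (2 * b - 1)) (Set.range a) ⊆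
      ({a ⟨0, hl⟩, a ⟨l - 1, one_le_sub_one_lt hl⟩} : Set ℤ) +
        foldSum (2 * (2 * b - 1) - 1) (Set.range a) := by
  classical
  set K := 2 * b - 1 with hK
  set A := Set.range a with hA
  set E : Set ℤ := {a ⟨0, by omega⟩, a ⟨l - 1, by omega⟩} with hE
  intro x hx
  rw [foldSum_two_mul] at hx
  obtain ⟨σ, hσ, hsum⟩ := hx
  have hαA : a ⟨0, by omega⟩ ∈ A := Set.mem_range_self _
  have hEA : E ⊆ A := by
    rintro z hz
    rcases hz with rfl | rfl
    · exact Set.mem_range_self _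
    · exact Set.mem_range_self _
  set Sf : ℕ → ℤ := fun i => if h : i < K then σ ⟨i, h⟩ else a ⟨0, by omega⟩ + a ⟨0, by omega⟩
    with hSfdef
  have hSf : ∀ i, Sf i ∈ A + A := by
    intro i
    simp only [hSfdef]
    split
    · exact hσ _
    · exact Set.add_mem_add hαA hαA
  have hx' : ∑ i ∈ Finset.range K, Sf i = x := by
    rw [← Fin.sum_univ_eq_sum_range Sf K, ← hsum]
    apply Finset.sum_congr rfl
    intro i _
    simp only [hSfdef, i.isLt, dif_pos, Fin.eta]
  have hrw : ∀ i : ℕ, ∃ e, e ∈ E ∧ ∃ w₁, w₁ ∈ A ∧ ∃ w₂, w₂ ∈ A ∧ ∃ p q : ℤ,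
      0 ≤ p ∧ p < b ∧ 0 ≤ q ∧ q < b ∧ Sf i = e + w₁ + p ∧ Sf i = e + w₂ - q := by
    intro i
    obtain ⟨u, hu, v, hv, huv⟩ := Set.mem_add.mp (hSf i)
    obtain ⟨e, he, w₁, hw₁, w₂, hw₂, p, q, h1, h2, h3, h4, h5, h6⟩ :=
      pair_rewrite hb hl a hmono hgap u hu v hv
    exact ⟨e, he, w₁, hw₁, w₂, hw₂, p, q, h1, h2, h3, h4, by omega, by omega⟩
  choose e he w₁ hw₁ w₂ hw₂ p q hp0 hpb hq0 hqb heq1 heq2 using hrw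
  by_cases hcase : ∃ i, i < K ∧ (p i = 0 ∨ q i = 0)
  · -- a pair with zero error: immediate win
    obtain ⟨i, hiK, hpq⟩ := hcase
    have hSi : ∃ w, w ∈ A ∧ Sf i = e i + w := by
      rcases hpq with h0 | h0
      · exact ⟨w₁ i, hw₁ i, by have := heq1 i; omega⟩
      · exact ⟨w₂ i, hw₂ i, by have := heq2 i; omega⟩
    obtain ⟨w, hw, hSi⟩ := hSi
    have hi_mem : i ∈ Finset.range K := Finset.mem_range.mpr hiK
    have hsplit : ∑ j ∈ (Finset.range K).erase i, Sf j + Sf i = x := by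
      rw [Finset.sum_erase_add _ _ hi_mem]; exact hx'
    have hrest : ∑ j ∈ (Finset.range K).erase i, Sf j ∈
        foldSum (2 * ((Finset.range K).erase i).card) A :=
      sum_mem_foldSum_two_card _ _ (fun j _ => hSf j)
    have hcard : 1 + 2 * ((Finset.range K).erase i).card = 2 * K - 1 := by
      rw [Finset.card_erase_of_mem hi_mem, Finset.card_range]
      omega
    refine Set.mem_add.mpr ⟨e i, he i, w + ∑ j ∈ (Finset.range K).erase i, Sf j, ?_, by omega⟩
    rw [← hcard, foldSum_add, foldSum_one]
    exact Set.add_mem_add hw hrest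
  · -- all errors nonzero: walk and pigeonhole
    push_neg at hcase
    have hp1 : ∀ i, i < K → 1 ≤ p i := by
      intro i hi
      have := (hcase i hi).1
      have := hp0 i
      omega
    have hq1 : ∀ i, i < K → 1 ≤ q i := by
      intro i hi
      have := (hcase i hi).2
      have := hq0 i
      omega
    have hK0 : 0 < K := by omega
    have hb2 : 2 ≤ b := by
      have h1 := hp1 0 hK0
      have h2 := hpb 0
      omega
    set W := sumWalk p q with hW
    have hWb : ∀ k, k ≤ K → -((b : ℤ) - 1) ≤ W k ∧ W k ≤ (b : ℤ) - 1 := by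
      intro k hk
      apply sumWalk_bound p q ((b : ℤ) - 1) (by omega)
      intro j hj
      have hjK : j < K := by omega
      have := hp1 j hjK; have := hq1 j hjK
      have := hpb j; have := hqb j
      refine ⟨by omega, by omega, by omega, by omega⟩
    have hpigeon : ∃ k₁ ∈ Finset.range (2 * b), ∃ k₂ ∈ Finset.range (2 * b),
        k₁ ≠ k₂ ∧ W k₁ = W k₂ := by
      apply Finset.exists_ne_map_eq_of_card_lt_of_maps_to
        (t := Finset.Icc (-(b : ℤ) + 1) ((b : ℤ) - 1))
      · rw [Finset.card_range, Int.card_Icc]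
        omega
      · intro k hk
        have hk' : k ≤ K := by
          have := Finset.mem_range.mp hk
          omega
        have := hWb k hk'
        rw [Finset.mem_coe, Finset.mem_Icc]
        omega
    have key : ∀ k₁ k₂, k₁ < k₂ → k₂ ≤ K → W k₁ = W k₂ →
        x ∈ E + foldSum (2 * K - 1) A := by
      intro k₁ k₂ hlt hk₂ heqW
      set B := Finset.Ico k₁ k₂ with hB
      have hBsub : B ⊆ Finset.range K := by
        intro i hi
        rw [Finset.mem_range]
        have := (Finset.mem_Ico.mp hi).2
        omega
      have htel : ∑ i ∈ B, (W (i + 1) - W i) = 0 := by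
        rw [hB, Finset.sum_Ico_eq_sub _ (le_of_lt hlt), Finset.sum_range_sub,
          Finset.sum_range_sub]
        omega
      set w' : ℕ → ℤ := fun i => if 0 < W i then w₂ i else w₁ i with hw'def
      have hw'A : ∀ i, w' i ∈ A := by
        intro i
        simp only [hw'def]
        split
        · exact hw₂ i
        · exact hw₁ i
      have hkey : ∀ i, i < K → Sf i = e i + w' i + (W (i + 1) - W i) := by
        intro i hi
        have hstep : W (i + 1) = if 0 < W i then W i - q i else W i + p i := by
          simp only [hW, sumWalk]
        by_cases hpos : 0 < W i
        · rw [hstep, if_pos hpos]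
          simp only [hw'def, if_pos hpos]
          have := heq2 i
          omega
        · rw [hstep, if_neg hpos]
          simp only [hw'def, if_neg hpos]
          have := heq1 i
          omega
      have h5 : ∑ i ∈ B, Sf i = ∑ i ∈ B, e i + ∑ i ∈ B, w' i := by
        calc ∑ i ∈ B, Sf i = ∑ i ∈ B, (e i + w' i + (W (i + 1) - W i)) := by
              apply Finset.sum_congr rfl
              intro i hi
              exact hkey i (by have := Finset.mem_range.mp (hBsub hi); omega)
          _ = ∑ i ∈ B, (e i + w' i) + ∑ i ∈ B, (W (i + 1) - W i) := Finset.sum_add_distrib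
          _ = ∑ i ∈ B, e i + ∑ i ∈ B, w' i := by rw [htel, Finset.sum_add_distrib]; omega
      have h6 : ∑ j ∈ Finset.range K \ B, Sf j + ∑ i ∈ B, Sf i = x := by
        rw [Finset.sum_sdiff hBsub]; exact hx'
      have h7 : ∑ i ∈ B, e i = e k₁ + ∑ i ∈ Finset.Ico (k₁ + 1) k₂, e i :=
        Finset.sum_eq_sum_Ico_succ_bot hlt e
      have m1 : ∑ i ∈ Finset.Ico (k₁ + 1) k₂, e i ∈ foldSum (k₂ - (k₁ + 1)) A := by
        have := sum_mem_foldSum_card (Finset.Ico (k₁ + 1) k₂) e (fun i _ => hEA (he i))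
        rwa [Nat.card_Ico] at this
      have m2 : ∑ i ∈ B, w' i ∈ foldSum (k₂ - k₁) A := by
        have := sum_mem_foldSum_card B w' (fun i _ => hw'A i)
        rwa [hB, Nat.card_Ico] at this
      have m3 : ∑ j ∈ Finset.range K \ B, Sf j ∈
          foldSum (2 * (K - (k₂ - k₁))) A := by
        have := sum_mem_foldSum_two_card (Finset.range K \ B) Sf (fun j _ => hSf j)
        rwa [Finset.card_sdiff_of_subset hBsub, Finset.card_range, hB, Nat.card_Ico] at this
      have hcnt : (k₂ - (k₁ + 1)) + ((k₂ - k₁) + 2 * (K - (k₂ - k₁))) = 2 * K - 1 := by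
        omega
      refine Set.mem_add.mpr ⟨e k₁, he k₁,
        ∑ i ∈ Finset.Ico (k₁ + 1) k₂, e i + (∑ i ∈ B, w' i + ∑ j ∈ Finset.range K \ B, Sf j),
        ?_, by omega⟩
      rw [← hcnt, foldSum_add, foldSum_add]
      exact Set.add_mem_add m1 (Set.add_mem_add m2 m3)
    obtain ⟨k₁, hk₁, k₂, hk₂, hne, heqW⟩ := hpigeon
    have hk₁' : k₁ ≤ K := by have := Finset.mem_range.mp hk₁; omega
    have hk₂' : k₂ ≤ K := by have := Finset.mem_range.mp hk₂; omega
    rcases hne.lt_or_gt with h | h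
    · exact key k₁ k₂ h hk₂' heqW
    · exact key k₂ k₁ h hk₁' heqW.symm
lemma core_subset {b l : ℕ} (hb : 1 ≤ b) (hl : 1 ≤ l) (a : Fin l → ℤ)
    (hmono : StrictMono a)
    (hgap : ∀ (i : ℕ) (h : i + 1 < l), a ⟨i + 1, h⟩ - a ⟨i, Nat.lt_of_succ_lt h⟩ ≤ (b : ℤ))
    (n : ℕ) (hn : 2 * (2 * b - 1) ≤ n) :
    foldSum n (Set.range a) ⊆
      ({a ⟨0, hl⟩, a ⟨l - 1, one_le_sub_one_lt hl⟩} : Set ℤ) + foldSum (n - 1) (Set.range a) := by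
  have e1 : n - 2 * (2 * b - 1) + 2 * (2 * b - 1) = n := by omega
  have h1 : foldSum n (Set.range a) =
      foldSum (n - 2 * (2 * b - 1)) (Set.range a) + foldSum (2 * (2 * b - 1)) (Set.range a) := by
    rw [← foldSum_add, e1]
  have h2 : foldSum (n - 2 * (2 * b - 1)) (Set.range a) + foldSum (2 * (2 * b - 1)) (Set.range a) ⊆
      foldSum (n - 2 * (2 * b - 1)) (Set.range a) +
        (({a ⟨0, by omega⟩, a ⟨l - 1, by omega⟩} : Set ℤ) +
          foldSum (2 * (2 * b - 1) - 1) (Set.range a)) :=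
    Set.add_subset_add (le_refl _) (core_exact hb hl a hmono hgap)
  have h3 : foldSum (n - 2 * (2 * b - 1)) (Set.range a) +
      (({a ⟨0, by omega⟩, a ⟨l - 1, by omega⟩} : Set ℤ) +
        foldSum (2 * (2 * b - 1) - 1) (Set.range a)) =
      ({a ⟨0, by omega⟩, a ⟨l - 1, by omega⟩} : Set ℤ) + foldSum (n - 1) (Set.range a) := by
    have e2 : n - 2 * (2 * b - 1) + (2 * (2 * b - 1) - 1) = n - 1 := by omega
    rw [add_left_comm, ← foldSum_add, e2]
  rw [h1, ← h3]
  exact h2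

lemma succ_step {b l : ℕ} (hb : 1 ≤ b) (hl : 1 ≤ l) (a : Fin l → ℤ)
    (hmono : StrictMono a)
    (hgap : ∀ (i : ℕ) (h : i + 1 < l), a ⟨i + 1, h⟩ - a ⟨i, Nat.lt_of_succ_lt h⟩ ≤ (b : ℤ))
    (m : ℕ) (hm : 2 * b ^ 2 ≤ m) :
    foldSum (m + 1) (Set.range a) =
      ({a ⟨0, hl⟩, a ⟨l - 1, one_le_sub_one_lt hl⟩} : Set ℤ) + foldSum m (Set.range a) := by
  have hq : 2 * b ≤ b ^ 2 + 1 := by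
    have h := sq_nonneg ((b : ℤ) - 1)
    have h2 : (2 * b : ℤ) ≤ (b : ℤ) ^ 2 + 1 := by nlinarith
    exact_mod_cast h2
  apply Set.Subset.antisymm
  · have h := core_subset hb hl a hmono hgap (m + 1) (by omega)
    simpa using h
  · intro x hx
    obtain ⟨u, hu, v, hv, huv⟩ := Set.mem_add.mp hx
    rw [foldSum_succ]
    have huA : u ∈ Set.range a := by
      rcases hu with rfl | rfl
      · exact Set.mem_range_self _
      · exact Set.mem_range_self _
    exact huv ▸ Set.add_mem_add huA hv

lemma stmt_aux {b l : ℕ} (hb : 1 ≤ b) (hl : 1 ≤ l) (a : Fin l → ℤ)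
    (hmono : StrictMono a)
    (hgap : ∀ (i : ℕ) (h : i + 1 < l), a ⟨i + 1, h⟩ - a ⟨i, Nat.lt_of_succ_lt h⟩ ≤ (b : ℤ)) :
    ∀ k : ℕ, foldSum (2 * b ^ 2 + 1 + k) (Set.range a) =
      foldSum (k + 1) ({a ⟨0, hl⟩, a ⟨l - 1, one_le_sub_one_lt hl⟩} : Set ℤ) +
        foldSum (2 * b ^ 2) (Set.range a) := by
  intro k
  induction k with
  | zero =>
      rw [foldSum_one]
      exact succ_step hb hl a hmono hgap (2 * b ^ 2) (le_refl _)
  | succ k ih =>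
      have h0 : 2 * b ^ 2 + 1 + (k + 1) = (2 * b ^ 2 + 1 + k) + 1 := by omega
      rw [h0, succ_step hb hl a hmono hgap (2 * b ^ 2 + 1 + k) (by omega), ih,
        ← add_assoc, ← foldSum_succ]

theorem stmt_0 (b l : ℕ) (hb : 1 ≤ b) (hl : 1 ≤ l) (a : Fin l → ℤ)
    (hmono : StrictMono a)
    (hgap : ∀ (i : ℕ) (h : i + 1 < l), a ⟨i + 1, h⟩ - a ⟨i, by omega⟩ ≤ (b : ℤ))
    (n : ℕ) (hn : 2 * b ^ 2 < n) :
    foldSum n (Set.range a) =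
      foldSum (n - 2 * b ^ 2) ({a ⟨0, by omega⟩, a ⟨l - 1, by omega⟩} : Set ℤ) +
        foldSum (2 * b ^ 2) (Set.range a) := by
  obtain ⟨k, rfl⟩ : ∃ k, n = 2 * b ^ 2 + 1 + k := ⟨n - (2 * b ^ 2 + 1), by omega⟩
  have h1 : 2 * b ^ 2 + 1 + k - 2 * b ^ 2 = k + 1 := by omega
  rw [h1]
  exact stmt_aux hb hl a hmono hgap k
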